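/- Two squares X, Y in a double groupoid share all four boundary edges if and only if the unique core element u with X = u·Y lies in the core bundle τ• (i.e., u has all boundary edges identities). -/

import Mathlib

/-- An (edge-symmetric, strict) double groupoid, presented set-theoretically:
objects, arrows of type 1, arrows of type 2, and squares, with partially
defined compositions (total functions whose axioms are guarded by
composability conditions).  `s1 X`, `t1 X` are the faces of a square in
direction 1 (these are arrows of type 2), and `s2 X`, `t2 X` are the faces
in direction 2 (arrows of type 1).  `c1` is composition in direction 1,
`c2` in direction 2; `iota1 a` is the `c1`-identity square on the type-2
arrow `a`, and `iota2 f` the `c2`-identity square on the type-1 arrow `f`.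
Every square has inverses `inv1`, `inv2` in both directions. -/
structure DoubleGroupoid where
  Obj : Type
  A1 : Type
  A2 : Type
  Sq : Type
  src1 : A1 → Obj
  tgt1 : A1 → Obj
  src2 : A2 → Obj
  tgt2 : A2 → Obj
  id1 : Obj → A1
  id2 : Obj → A2
  comp1 : A1 → A1 → A1
  comp2 : A2 → A2 → A2
  s1 : Sq → A2
  t1 : Sq → A2
  s2 : Sq → A1
  t2 : Sq → A1
  iota1 : A2 → Sq
  iota2 : A1 → Sq
  c1 : Sq → Sq → Sq
  c2 : Sq → Sq → Sq
  inv1 : Sq → Sq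
  inv2 : Sq → Sq
  -- the two edge categories are groupoid-like
  src1_id : ∀ x, src1 (id1 x) = x
  tgt1_id : ∀ x, tgt1 (id1 x) = x
  src2_id : ∀ x, src2 (id2 x) = x
  tgt2_id : ∀ x, tgt2 (id2 x) = x
  comp1_src : ∀ f g, tgt1 f = src1 g → src1 (comp1 f g) = src1 f
  comp1_tgt : ∀ f g, tgt1 f = src1 g → tgt1 (comp1 f g) = tgt1 g
  comp2_src : ∀ f g, tgt2 f = src2 g → src2 (comp2 f g) = src2 f
  comp2_tgt : ∀ f g, tgt2 f = src2 g → tgt2 (comp2 f g) = tgt2 g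
  comp1_assoc : ∀ f g h, tgt1 f = src1 g → tgt1 g = src1 h →
    comp1 (comp1 f g) h = comp1 f (comp1 g h)
  comp2_assoc : ∀ f g h, tgt2 f = src2 g → tgt2 g = src2 h →
    comp2 (comp2 f g) h = comp2 f (comp2 g h)
  comp1_id_left : ∀ f, comp1 (id1 (src1 f)) f = f
  comp1_id_right : ∀ f, comp1 f (id1 (tgt1 f)) = f
  comp2_id_left : ∀ f, comp2 (id2 (src2 f)) f = f
  comp2_id_right : ∀ f, comp2 f (id2 (tgt2 f)) = f
  ainv1 : A1 → A1
  ainv2 : A2 → A2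
  ainv1_left : ∀ f, comp1 (ainv1 f) f = id1 (tgt1 f)
  ainv1_right : ∀ f, comp1 f (ainv1 f) = id1 (src1 f)
  ainv2_left : ∀ f, comp2 (ainv2 f) f = id2 (tgt2 f)
  ainv2_right : ∀ f, comp2 f (ainv2 f) = id2 (src2 f)
  -- corner compatibility of the four faces of a square
  corner_ss : ∀ X, src2 (s1 X) = src1 (s2 X)
  corner_st : ∀ X, tgt2 (s1 X) = src1 (t2 X)
  corner_ts : ∀ X, src2 (t1 X) = tgt1 (s2 X)
  corner_tt : ∀ X, tgt2 (t1 X) = tgt1 (t2 X)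
  -- faces of the identity squares
  s1_iota1 : ∀ a, s1 (iota1 a) = a
  t1_iota1 : ∀ a, t1 (iota1 a) = a
  s2_iota1 : ∀ a, s2 (iota1 a) = id1 (src2 a)
  t2_iota1 : ∀ a, t2 (iota1 a) = id1 (tgt2 a)
  s2_iota2 : ∀ f, s2 (iota2 f) = f
  t2_iota2 : ∀ f, t2 (iota2 f) = f
  s1_iota2 : ∀ f, s1 (iota2 f) = id2 (src1 f)
  t1_iota2 : ∀ f, t1 (iota2 f) = id2 (tgt1 f)
  -- faces of composites
  c1_s1 : ∀ X Y, t1 X = s1 Y → s1 (c1 X Y) = s1 X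
  c1_t1 : ∀ X Y, t1 X = s1 Y → t1 (c1 X Y) = t1 Y
  c1_s2 : ∀ X Y, t1 X = s1 Y → s2 (c1 X Y) = comp1 (s2 X) (s2 Y)
  c1_t2 : ∀ X Y, t1 X = s1 Y → t2 (c1 X Y) = comp1 (t2 X) (t2 Y)
  c2_s2 : ∀ X Y, t2 X = s2 Y → s2 (c2 X Y) = s2 X
  c2_t2 : ∀ X Y, t2 X = s2 Y → t2 (c2 X Y) = t2 Y
  c2_s1 : ∀ X Y, t2 X = s2 Y → s1 (c2 X Y) = comp2 (s1 X) (s1 Y)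
  c2_t1 : ∀ X Y, t2 X = s2 Y → t1 (c2 X Y) = comp2 (t1 X) (t1 Y)
  -- category laws for the square compositions
  c1_assoc : ∀ X Y Z, t1 X = s1 Y → t1 Y = s1 Z →
    c1 (c1 X Y) Z = c1 X (c1 Y Z)
  c2_assoc : ∀ X Y Z, t2 X = s2 Y → t2 Y = s2 Z →
    c2 (c2 X Y) Z = c2 X (c2 Y Z)
  c1_id_left : ∀ X, c1 (iota1 (s1 X)) X = X
  c1_id_right : ∀ X, c1 X (iota1 (t1 X)) = X
  c2_id_left : ∀ X, c2 (iota2 (s2 X)) X = X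
  c2_id_right : ∀ X, c2 X (iota2 (t2 X)) = X
  -- identity squares are functorial
  iota1_comp : ∀ a b, tgt2 a = src2 b → iota1 (comp2 a b) = c2 (iota1 a) (iota1 b)
  iota2_comp : ∀ f g, tgt1 f = src1 g → iota2 (comp1 f g) = c1 (iota2 f) (iota2 g)
  -- the interchange law
  interchange : ∀ X Y Z W, t1 X = s1 Y → t2 X = s2 Z → t2 Y = s2 W → t1 Z = s1 W →
    c2 (c1 X Y) (c1 Z W) = c1 (c2 X Z) (c2 Y W)
  -- inverses of squares in each direction
  inv1_s1 : ∀ X, s1 (inv1 X) = t1 X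
  inv1_t1 : ∀ X, t1 (inv1 X) = s1 X
  inv1_s2 : ∀ X, s2 (inv1 X) = ainv1 (s2 X)
  inv1_t2 : ∀ X, t2 (inv1 X) = ainv1 (t2 X)
  inv2_s2 : ∀ X, s2 (inv2 X) = t2 X
  inv2_t2 : ∀ X, t2 (inv2 X) = s2 X
  inv2_s1 : ∀ X, s1 (inv2 X) = ainv2 (s1 X)
  inv2_t1 : ∀ X, t1 (inv2 X) = ainv2 (t1 X)
  c1_inv1 : ∀ X, c1 X (inv1 X) = iota1 (s1 X)
  inv1_c1 : ∀ X, c1 (inv1 X) X = iota1 (t1 X)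
  c2_inv2 : ∀ X, c2 X (inv2 X) = iota2 (s2 X)
  inv2_c2 : ∀ X, c2 (inv2 X) X = iota2 (t2 X)

namespace DoubleGroupoid

variable (D : DoubleGroupoid)

/-- The transmutation `u · Y` : the composite of the 2×2 barycentric
subdivision with `u` in the depth-0 (source-corner) position, `Y` in the
depth-2 (sink-corner) position, and identity squares in the remaining
positions. -/
def transmute (u Y : D.Sq) : D.Sq :=
  D.c2 (D.c1 u (D.iota2 (D.s2 Y))) (D.c1 (D.iota1 (D.s1 Y)) Y)

/-- The source corner object of a square. -/
def srcObj (X : D.Sq) : D.Obj := D.src1 (D.s2 X)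

/-- The sink (target corner) object of a square. -/
def sinkObj (X : D.Sq) : D.Obj := D.tgt1 (D.t2 X)

/-- Membership in the core groupoid `τ⌟`: both target faces are identities
at the sink object. -/
def IsCore (u : D.Sq) : Prop :=
  D.t1 u = D.id2 (D.sinkObj u) ∧ D.t2 u = D.id1 (D.sinkObj u)

/-- Membership in the core bundle `τ•` over `p`: all four boundary faces
are identities at `p`. -/
def IsBundle (u : D.Sq) (p : D.Obj) : Prop :=
  D.s1 u = D.id2 p ∧ D.t1 u = D.id2 p ∧ D.s2 u = D.id1 p ∧ D.t2 u = D.id1 p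

end DoubleGroupoid

/-- Two squares `X`, `Y` (with common targets) share all four
boundary edges iff the core element `u` with `X = u · Y` lies in the core
bundle, i.e. all boundary edges of `u` are identities. -/
theorem share_boundary_iff_bundle (D : DoubleGroupoid) (X Y u : D.Sq)
    (h1 : D.t1 X = D.t1 Y) (h2 : D.t2 X = D.t2 Y)
    (hu : D.IsCore u) (hcomp : D.sinkObj u = D.srcObj Y)
    (hX : X = D.transmute u Y) :
    (D.s1 X = D.s1 Y ∧ D.s2 X = D.s2 Y) ↔ ∃ p : D.Obj, D.IsBundle u p := by
  obtain ⟨hu1, hu2⟩ := hu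
  -- q : the sink object of u, which is the source corner of Y
  have hq : D.src1 (D.s2 Y) = D.sinkObj u := hcomp.symm
  -- composability for A := c1 u (iota2 (s2 Y))
  have hA : D.t1 u = D.s1 (D.iota2 (D.s2 Y)) := by
    rw [D.s1_iota2, hu1, hq]
  -- faces of A
  have hAs1 : D.s1 (D.c1 u (D.iota2 (D.s2 Y))) = D.s1 u := D.c1_s1 _ _ hA
  have hAt1 : D.t1 (D.c1 u (D.iota2 (D.s2 Y))) = D.id2 (D.tgt1 (D.s2 Y)) := by
    rw [D.c1_t1 _ _ hA, D.t1_iota2]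
  have hAs2 : D.s2 (D.c1 u (D.iota2 (D.s2 Y))) = D.comp1 (D.s2 u) (D.s2 Y) := by
    rw [D.c1_s2 _ _ hA, D.s2_iota2]
  have hAt2 : D.t2 (D.c1 u (D.iota2 (D.s2 Y))) = D.s2 Y := by
    rw [D.c1_t2 _ _ hA, D.t2_iota2, hu2, ← hq, D.comp1_id_left]
  -- composability for B := c1 (iota1 (s1 Y)) Y
  have hB : D.t1 (D.iota1 (D.s1 Y)) = D.s1 Y := D.t1_iota1 _
  -- faces of B
  have hBs1 : D.s1 (D.c1 (D.iota1 (D.s1 Y)) Y) = D.s1 Y := by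
    rw [D.c1_s1 _ _ hB, D.s1_iota1]
  have hBt1 : D.t1 (D.c1 (D.iota1 (D.s1 Y)) Y) = D.t1 Y := D.c1_t1 _ _ hB
  have hBs2 : D.s2 (D.c1 (D.iota1 (D.s1 Y)) Y) = D.s2 Y := by
    rw [D.c1_s2 _ _ hB, D.s2_iota1, D.corner_ss, D.comp1_id_left]
  have hBt2 : D.t2 (D.c1 (D.iota1 (D.s1 Y)) Y) = D.t2 Y := by
    rw [D.c1_t2 _ _ hB, D.t2_iota1, D.corner_st, D.comp1_id_left]
  -- composability of A and B in direction 2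
  have hAB : D.t2 (D.c1 u (D.iota2 (D.s2 Y))) = D.s2 (D.c1 (D.iota1 (D.s1 Y)) Y) := by
    rw [hAt2, hBs2]
  -- faces of X
  have hXs1 : D.s1 X = D.comp2 (D.s1 u) (D.s1 Y) := by
    rw [hX]; unfold DoubleGroupoid.transmute
    rw [D.c2_s1 _ _ hAB, hAs1, hBs1]
  have hXs2 : D.s2 X = D.comp1 (D.s2 u) (D.s2 Y) := by
    rw [hX]; unfold DoubleGroupoid.transmute
    rw [D.c2_s2 _ _ hAB, hAs2]
  -- edge composability facts
  have hg1 : D.tgt2 (D.s1 u) = D.src2 (D.s1 Y) := by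
    rw [D.corner_st, hu2, D.corner_ss, hq, DoubleGroupoid.sinkObj, D.src1_id]
  have hg2 : D.tgt1 (D.s2 u) = D.src1 (D.s2 Y) := by
    rw [← D.corner_ts, hu1, hq, DoubleGroupoid.sinkObj, D.src2_id]
  -- sources of the arrow inverses, derived from faces of square inverses
  have ha2 : D.src2 (D.ainv2 (D.s1 Y)) = D.tgt2 (D.s1 Y) := by
    rw [← D.inv2_s1, D.corner_ss, D.inv2_s2, ← D.corner_st]
  have ha1 : D.src1 (D.ainv1 (D.s2 Y)) = D.tgt1 (D.s2 Y) := by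
    rw [← D.inv1_s2, ← D.corner_ss, D.inv1_s1, D.corner_ts]
  constructor
  · rintro ⟨e1, e2⟩
    refine ⟨D.sinkObj u, ?_, hu1, ?_, hu2⟩
    · -- cancel s1 Y on the right
      have h : D.comp2 (D.s1 u) (D.s1 Y) = D.s1 Y := by rw [← hXs1, e1]
      have := congrArg (fun a => D.comp2 a (D.ainv2 (D.s1 Y))) h
      try simp only at this
      rw [D.comp2_assoc _ _ _ hg1 ha2.symm,
        D.ainv2_right, ← hg1, D.comp2_id_right] at this
      rw [this, D.corner_st, hu2, D.src1_id]
    · have h : D.comp1 (D.s2 u) (D.s2 Y) = D.s2 Y := by rw [← hXs2, e2]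
      have := congrArg (fun a => D.comp1 a (D.ainv1 (D.s2 Y))) h
      try simp only at this
      rw [D.comp1_assoc _ _ _ hg2 ha1.symm,
        D.ainv1_right, ← hg2, D.comp1_id_right] at this
      rw [this, ← D.corner_ts, hu1, D.src2_id]
  · rintro ⟨p, b1, b2, b3, b4⟩
    have hp : p = D.sinkObj u := by
      rw [DoubleGroupoid.sinkObj, b4, D.tgt1_id]
    subst hp
    constructor
    · rw [hXs1, b1, ← hq, ← D.corner_ss, D.comp2_id_left]
    · rw [hXs2, b3, ← hq, D.comp1_id_left]
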